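/- arXiv:1905.12482 — 10 statements merged into one kernel-verified Lean document; each statement's English description precedes it below -/
import Mathlib

section
/- Let G be a group (pro-p group) and H a subgroup of index p, and f : H → G a homomorphism such that the only subgroup K ≤ H that is normal in G and satisfies f(K) ≤ K is the trivial subgroup (f is a simple virtual endomorphism). If H contains an element of order p, then there exists an element of order p in f(H) that does not lie in H. -/
/-- Lemma 2.4, first part: if `f : H → G` is a simple virtual
endomorphism of degree `p` of a (pro-)`p` group `G` and `H` contains an element
of order `p`, then `f(H) \ H` contains an element of order `p`. -/
theorem stmt0 (p : ℕ) (hp : p.Prime) (G : Type*) [Group G] [Finite G]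
    (hG : IsPGroup p G) (H : Subgroup G) (hidx : H.index = p) (f : H →* G)
    (hsimple : ∀ K : Subgroup G, K ≤ H → K.Normal →
      (∀ k (hk : k ∈ H), k ∈ K → f ⟨k, hk⟩ ∈ K) → K = ⊥)
    (hord : ∃ h : H, orderOf (h : G) = p) :
    ∃ g ∈ f.range, orderOf g = p ∧ g ∉ H := by
  by_contra hcon
  push_neg at hcon
  -- hcon : ∀ g ∈ f.range, orderOf g = p → g ∈ H
  have hpfact : Fact p.Prime := ⟨hp⟩
  -- `H` is normal in `G` (index `p` subgroup of a finite `p`-group).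
  have hnorm : H.Normal := by
    have hnil : Group.IsNilpotent G := hG.isNilpotent
    have hnc : NormalizerCondition G := normalizerCondition_of_isNilpotent
    rw [← Subgroup.normalizer_eq_top_iff]
    have hne : H ≠ ⊤ := by
      intro h
      rw [h, Subgroup.index_top] at hidx
      exact hp.ne_one hidx.symm
    have hlt : H < (Subgroup.normalizer (H : Set G)) := hnc H (lt_top_iff_ne_top.mpr hne)
    have hrel := Subgroup.relIndex_mul_index (H := H) Subgroup.le_normalizer
    rw [hidx] at hrel
    have : (Subgroup.normalizer (H : Set G)).index = 1 ∨ (Subgroup.normalizer (H : Set G)).index = p :=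
      (Nat.Prime.eq_one_or_self_of_dvd hp _ ⟨_, by rw [← hrel]; ring⟩)
    rcases this with h1 | hP
    · exact Subgroup.index_eq_one.mp h1
    · exfalso
      have : H.relIndex (Subgroup.normalizer (H : Set G)) = 1 := by
        have := hrel
        rw [hP] at this
        exact Nat.eq_of_mul_eq_mul_right hp.pos (by simpa using this)
      exact hlt.not_ge (Subgroup.relIndex_eq_one.mp this)
  -- The subgroup generated by elements of `H` of order dividing `p`.
  set S : Set G := {x | x ∈ H ∧ x ^ p = 1} with hS
  set K : Subgroup G := Subgroup.closure S with hK
  have hKH : K ≤ H := (Subgroup.closure_le _).mpr fun x hx => hx.1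
  -- `S` is invariant under `f` (using `hcon`).
  have hfS : ∀ x (hx : x ∈ S), f ⟨x, hx.1⟩ ∈ S := by
    intro x hx
    have hpow : (f ⟨x, hx.1⟩) ^ p = 1 := by
      have h1 : (⟨x, hx.1⟩ : H) ^ p = 1 := Subtype.ext (by simpa using hx.2)
      rw [← map_pow, h1, map_one]
    refine ⟨?_, hpow⟩
    have hdvd : orderOf (f ⟨x, hx.1⟩) ∣ p := orderOf_dvd_of_pow_eq_one hpow
    rcases (Nat.Prime.eq_one_or_self_of_dvd hp _ hdvd) with h1 | hP
    · rw [orderOf_eq_one_iff.mp h1]; exact one_mem H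
    · exact hcon _ ⟨_, rfl⟩ hP
  -- `K` is normal in `G`.
  have hKnorm : K.Normal := by
    constructor
    intro n hn g
    have : K.map (MulAut.conj g).toMonoidHom ≤ K := by
      rw [hK, MonoidHom.map_closure]
      apply Subgroup.closure_mono
      rintro _ ⟨x, hx, rfl⟩
      refine ⟨hnorm.conj_mem x hx.1 g, ?_⟩
      simp only [MulEquiv.coe_toMonoidHom, MulAut.conj_apply]
      rw [conj_pow, hx.2, mul_one, mul_inv_cancel]
    exact this ⟨n, hn, rfl⟩
  -- `K` is `f`-invariant.
  have hKf : ∀ k (hk : k ∈ H), k ∈ K → f ⟨k, hk⟩ ∈ K := by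
    have : ∀ k (hk : k ∈ K), ∀ hk' : k ∈ H, f ⟨k, hk'⟩ ∈ K := by
      intro k hk
      induction hk using Subgroup.closure_induction with
      | mem x hx => exact fun hx' => Subgroup.subset_closure (by
          have : (⟨x, hx'⟩ : H) = ⟨x, hx.1⟩ := rfl
          rw [this]; exact hfS x hx)
      | one =>
          intro h1
          have : (⟨1, h1⟩ : H) = 1 := rfl
          rw [this, map_one]
          exact K.one_mem
      | mul x y hx hy ihx ihy =>
          intro hxy
          have hx' : x ∈ H := hKH hx
          have hy' : y ∈ H := hKH hy
          have : (⟨x * y, hxy⟩ : H) = ⟨x, hx'⟩ * ⟨y, hy'⟩ := rfl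
          rw [this, map_mul]
          exact Subgroup.mul_mem K (ihx hx') (ihy hy')
      | inv x hx ihx =>
          intro hxi
          have hx' : x ∈ H := hKH hx
          have : (⟨x⁻¹, hxi⟩ : H) = (⟨x, hx'⟩)⁻¹ := rfl
          rw [this, map_inv]
          exact Subgroup.inv_mem K (ihx hx')
    exact fun k hk hkK => this k hkK hk
  -- `K` is nontrivial, contradiction.
  obtain ⟨h, hh⟩ := hord
  have hmem : (h : G) ∈ K := Subgroup.subset_closure ⟨h.2, by rw [← hh]; exact pow_orderOf_eq_one _⟩
  have hbot := hsimple K hKH hKnorm hKf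
  rw [hbot, Subgroup.mem_bot] at hmem
  rw [hmem, orderOf_one] at hh
  exact hp.ne_one hh.symm
end

section
/- Let G be a group, H a subgroup of index p, and f : H → G a simple virtual endomorphism such that H contains an element of order p. Then G splits as G = H ⋊ ⟨a⟩ for some element a ∈ G of order p. -/
/-- Lemma 2.4: if `f : H → G` is a simple virtual endomorphism of
degree `p` of a finite `p`-group `G` and `H` contains an element of order `p`,
then `G = H ⋊ ⟨a⟩` for some element `a` of order `p`. -/
theorem stmt1 (p : ℕ) (hp : p.Prime) (G : Type*) [Group G] [Finite G]
    (hG : IsPGroup p G) (H : Subgroup G) (hidx : H.index = p) (f : H →* G)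
    (hsimple : ∀ K : Subgroup G, K ≤ H → K.Normal →
      (∀ k (hk : k ∈ H), k ∈ K → f ⟨k, hk⟩ ∈ K) → K = ⊥)
    (hord : ∃ h : H, orderOf (h : G) = p) :
    ∃ a : G, orderOf a = p ∧ H ⊓ Subgroup.zpowers a = ⊥ ∧
      H ⊔ Subgroup.zpowers a = ⊤ := by
  -- First: there exists an element of order `p` outside `H`.
  have key : ∃ a : G, orderOf a = p ∧ a ∉ H := by
    by_contra hcon
    push_neg at hcon
    -- all elements with `g^p = 1` lie in `H`
    set s : Set G := {g : G | g ^ p = 1} with hs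
    have hsH : s ⊆ (H : Set G) := by
      intro g hg
      rcases eq_or_ne g 1 with rfl | hg1
      · exact H.one_mem
      · have : orderOf g ∣ p := orderOf_dvd_of_pow_eq_one hg
        rcases (Nat.Prime.eq_one_or_self_of_dvd hp _ this) with h1 | h1
        · exact absurd (orderOf_eq_one_iff.mp h1) hg1
        · exact hcon g h1
    set K : Subgroup G := Subgroup.closure s with hK
    have hKH : K ≤ H := (Subgroup.closure_le H).mpr hsH
    have hKnormal : K.Normal := by
      constructor
      intro n hn g
      induction hn using Subgroup.closure_induction with
      | mem x hx =>
        apply Subgroup.subset_closure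
        show (g * x * g⁻¹) ^ p = 1
        rw [conj_pow]
        simp [hx.out]
      | one => simp [K.one_mem]
      | mul x y hx hy ihx ihy =>
        have : g * (x * y) * g⁻¹ = (g * x * g⁻¹) * (g * y * g⁻¹) := by group
        rw [this]; exact K.mul_mem ihx ihy
      | inv x hx ihx =>
        have : g * x⁻¹ * g⁻¹ = (g * x * g⁻¹)⁻¹ := by group
        rw [this]; exact K.inv_mem ihx
    have hKinv : ∀ k (hk : k ∈ H), k ∈ K → f ⟨k, hk⟩ ∈ K := by
      have main : ∀ k (hk : k ∈ Subgroup.closure s), ∀ hk' : k ∈ H, f ⟨k, hk'⟩ ∈ K := by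
        intro k hk
        induction hk using Subgroup.closure_induction with
        | mem x hx =>
          intro hx'
          apply Subgroup.subset_closure
          show (f ⟨x, hx'⟩) ^ p = 1
          rw [← map_pow]
          have : (⟨x, hx'⟩ : H) ^ p = 1 := by
            ext; simpa using hx.out
          rw [this, map_one]
        | one =>
          intro h1
          have : (⟨(1:G), h1⟩ : H) = 1 := rfl
          rw [this, map_one]; exact K.one_mem
        | mul x y hx hy ihx ihy =>
          intro hxy
          have hxH : x ∈ H := hKH hx
          have hyH : y ∈ H := hKH hy
          have : (⟨x * y, hxy⟩ : H) = ⟨x, hxH⟩ * ⟨y, hyH⟩ := rfl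
          rw [this, map_mul]
          exact K.mul_mem (ihx hxH) (ihy hyH)
        | inv x hx ihx =>
          intro hxi
          have hxH : x ∈ H := hKH hx
          have : (⟨x⁻¹, hxi⟩ : H) = (⟨x, hxH⟩)⁻¹ := rfl
          rw [this, map_inv]
          exact K.inv_mem (ihx hxH)
      intro k hk hkK
      exact main k hkK hk
    have hKbot : K = ⊥ := hsimple K hKH hKnormal hKinv
    obtain ⟨h, hh⟩ := hord
    have hmem : (h : G) ∈ K := by
      apply Subgroup.subset_closure
      show ((h : G)) ^ p = 1
      rw [← hh]; exact pow_orderOf_eq_one _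
    rw [hKbot, Subgroup.mem_bot] at hmem
    have : orderOf (h : G) = 1 := by rw [hmem, orderOf_one]
    rw [hh] at this
    exact hp.one_lt.ne' this
  obtain ⟨a, ha, haH⟩ := key
  refine ⟨a, ha, ?_, ?_⟩
  · -- H ⊓ zpowers a = ⊥
    rw [Subgroup.eq_bot_iff_forall]
    rintro x ⟨hxH, hxa⟩
    by_contra hx1
    have hdvd : orderOf x ∣ p := by
      rw [← ha]; exact orderOf_dvd_of_mem_zpowers hxa
    have hordx : orderOf x = p := by
      rcases hp.eq_one_or_self_of_dvd _ hdvd with h1 | h1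
      · exact absurd (orderOf_eq_one_iff.mp h1) hx1
      · exact h1
    have hle : Subgroup.zpowers x ≤ Subgroup.zpowers a :=
      (Subgroup.zpowers_le).mpr hxa
    have heq : Subgroup.zpowers x = Subgroup.zpowers a := by
      apply Subgroup.eq_of_le_of_card_ge hle
      rw [Nat.card_zpowers, Nat.card_zpowers, ha, hordx]
    have : a ∈ Subgroup.zpowers x := heq ▸ Subgroup.mem_zpowers a
    exact haH (Subgroup.zpowers_le.mpr hxH this)
  · -- H ⊔ zpowers a = ⊤
    set J := H ⊔ Subgroup.zpowers a with hJ
    have hHJ : H ≤ J := le_sup_left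
    have hdvd : J.index ∣ p := by
      rw [← hidx]; exact Subgroup.index_dvd_of_le hHJ
    rcases hp.eq_one_or_self_of_dvd _ hdvd with h1 | h1
    · exact Subgroup.index_eq_one.mp h1
    · exfalso
      have hrel : H.relIndex J * J.index = H.index := Subgroup.relIndex_mul_index hHJ
      rw [h1, hidx] at hrel
      have hp0 : p ≠ 0 := hp.pos.ne'
      have : H.relIndex J = 1 :=
        Nat.eq_of_mul_eq_mul_right hp.pos (by rw [hrel, one_mul])
      have hJH : J ≤ H := Subgroup.relIndex_eq_one.mp this
      exact haH (hJH (le_sup_right (α := Subgroup G) (Subgroup.mem_zpowers a)))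
end

section
/- Let G be a pro-p group and f : H → G a simple virtual endomorphism of degree p, and suppose there is an element a of order p in f(H) \ H. Then the restriction of f to H ∩ f(H), viewed as a homomorphism H ∩ f(H) → f(H), is a simple virtual endomorphism of f(H) of degree p; that is, [f(H) : H ∩ f(H)] = p and the only subgroup K of H ∩ f(H) that is normal in f(H) and satisfies f(K) ≤ K is trivial. -/
/-- Lemma 2.5: if `f : H → G` is a simple virtual endomorphism of
degree `p` and there is an element `a` of order `p` in `f(H) \ H`, then the
restriction of `f` to `H ∩ f(H)` is a simple virtual endomorphism of `f(H)` of
degree `p`: `[f(H) : H ∩ f(H)] = p`, and every subgroup `K ≤ H ⊓ f(H)` that is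
normal in `f(H)` and `f`-invariant is trivial. -/
theorem stmt2 (p : ℕ) (hp : p.Prime) (G : Type*) [Group G]
    (H : Subgroup G) (hidx : H.index = p) (f : H →* G)
    (hsimple : ∀ K : Subgroup G, K ≤ H → K.Normal →
      (∀ k (hk : k ∈ H), k ∈ K → f ⟨k, hk⟩ ∈ K) → K = ⊥)
    (a : G) (ha : a ∈ f.range) (hanotH : a ∉ H) (haord : orderOf a = p) :
    H.relIndex f.range = p ∧
      ∀ K : Subgroup G, K ≤ H ⊓ f.range →
        (∀ x ∈ f.range, ∀ k ∈ K, x * k * x⁻¹ ∈ K) →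
        (∀ k (hk : k ∈ H), k ∈ K → f ⟨k, hk⟩ ∈ K) → K = ⊥ := by
  have hpfact : Fact p.Prime := ⟨hp⟩
  set T : Subgroup G := Subgroup.zpowers a with hT
  have hcardT : Nat.card T = p := by rw [hT, Nat.card_zpowers, haord]
  -- T ∩ H = ⊥
  have hTH : ∀ x : G, x ∈ T → x ∈ H → x = 1 := by
    intro x hxT hxH
    by_contra hx1
    -- a is a zpower of x
    have hx1' : (⟨x, hxT⟩ : T) ≠ 1 := by
      simp only [ne_eq, Subtype.ext_iff, OneMemClass.coe_one]; exact hx1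
    have hmem : (⟨a, Subgroup.mem_zpowers a⟩ : T) ∈ Subgroup.zpowers (⟨x, hxT⟩ : T) :=
      mem_zpowers_of_prime_card hcardT hx1'
    obtain ⟨n, hn⟩ := hmem
    have : x ^ n = a := by
      have := congrArg (Subtype.val) hn
      simpa using this
    exact hanotH (this ▸ H.zpow_mem hxH n)
  -- every g ∈ G decomposes as g = h * t with h ∈ H, t ∈ T
  have hHfin : H.FiniteIndex := ⟨by rw [hidx]; exact hp.ne_zero⟩
  have hdecomp : ∀ g : G, ∃ h ∈ H, ∃ t ∈ T, g = h * t := by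
    have hfin : Finite (G ⧸ H) := H.finite_quotient_of_finiteIndex
    -- the map T → G ⧸ H is injective, hence bijective
    have hinj : Function.Injective (fun t : T => ((t : G) : G ⧸ H)) := by
      intro t₁ t₂ h
      have : (t₁ : G)⁻¹ * (t₂ : G) ∈ H := (QuotientGroup.eq).mp h
      have h1 : (t₁ : G)⁻¹ * (t₂ : G) = 1 := hTH _ (T.mul_mem (T.inv_mem t₁.2) t₂.2) this
      have := inv_mul_eq_one.mp h1
      exact Subtype.ext this
    have hcardQ : Nat.card (G ⧸ H) = p := by rw [← hidx]; rfl
    have hbij : Function.Bijective (fun t : T => ((t : G) : G ⧸ H)) := by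
      rw [Nat.bijective_iff_injective_and_card]
      exact ⟨hinj, by rw [hcardT, hcardQ]⟩
    intro g
    obtain ⟨t, ht⟩ := hbij.2 ((g⁻¹ : G) : G ⧸ H)
    have : (t : G)⁻¹ * g⁻¹ ∈ H := (QuotientGroup.eq).mp ht
    refine ⟨((t : G)⁻¹ * g⁻¹)⁻¹, H.inv_mem this, (t : G)⁻¹, T.inv_mem t.2, ?_⟩
    group
  have hTle : T ≤ f.range := (Subgroup.zpowers_le).mpr ha
  constructor
  · -- relindex = p
    have hne : H.relIndex f.range ≠ 0 := by
      intro h0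
      have := Subgroup.relIndex_eq_zero_of_le_right le_top h0
      rw [Subgroup.relIndex_top_right, hidx] at this
      exact hp.ne_zero this
    have hle : H.relIndex f.range ≤ p := by
      have := Subgroup.relIndex_le_of_le_right (H := H) (K := f.range) le_top
        (by rw [Subgroup.relIndex_top_right, hidx]; exact hp.ne_zero)
      rwa [Subgroup.relIndex_top_right, hidx] at this
    have hfinQ : Subgroup.FiniteIndex (H.subgroupOf f.range) := ⟨hne⟩
    have hfin2 : Finite (f.range ⧸ H.subgroupOf f.range) :=
      Subgroup.finite_quotient_of_finiteIndex
    -- injective map T → f.range ⧸ (H.subgroupOf f.range)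
    have hinj2 : Function.Injective
        (fun t : T => ((⟨(t : G), hTle t.2⟩ : f.range) : f.range ⧸ H.subgroupOf f.range)) := by
      intro t₁ t₂ h
      have : (⟨(t₁ : G), hTle t₁.2⟩ : f.range)⁻¹ * ⟨(t₂ : G), hTle t₂.2⟩
          ∈ H.subgroupOf f.range := (QuotientGroup.eq).mp h
      have hH' : (t₁ : G)⁻¹ * (t₂ : G) ∈ H := by
        simpa [Subgroup.mem_subgroupOf] using this
      have h1 : (t₁ : G)⁻¹ * (t₂ : G) = 1 :=
        hTH _ (T.mul_mem (T.inv_mem t₁.2) t₂.2) hH'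
      exact Subtype.ext (inv_mul_eq_one.mp h1)
    have hge : p ≤ H.relIndex f.range := by
      have := Nat.card_le_card_of_injective _ hinj2
      rwa [hcardT] at this
    omega
  · -- simplicity
    intro K hKle hKnorm hKinv
    have hKH : K ≤ H := hKle.trans inf_le_left
    -- every G-conjugate of an element of K lies in H
    have hconj : ∀ g : G, ∀ k ∈ K, g * k * g⁻¹ ∈ H := by
      intro g k hk
      obtain ⟨h, hh, t, ht, rfl⟩ := hdecomp g
      have htk : t * k * t⁻¹ ∈ K := hKnorm t (hTle ht) k hk
      have : h * (t * k * t⁻¹) * h⁻¹ ∈ H := H.mul_mem (H.mul_mem hh (hKH htk)) (H.inv_mem hh)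
      convert this using 1
      group
    set N : Subgroup G := Subgroup.normalClosure (K : Set G) with hN
    have hNH : N ≤ H := by
      rw [hN, Subgroup.normalClosure]
      rw [Subgroup.closure_le]
      intro x hx
      obtain ⟨k, hk, hcj⟩ := Group.mem_conjugatesOfSet_iff.mp hx
      obtain ⟨c, hc⟩ := isConj_iff.mp hcj
      exact hc ▸ hconj c k hk
    have hNnorm : N.Normal := Subgroup.normalClosure_normal
    -- f-invariance of N
    have hNinv : ∀ x (hx : x ∈ H), x ∈ N → f ⟨x, hx⟩ ∈ N := by
      have key : ∀ x (hx : x ∈ Subgroup.closure (Group.conjugatesOfSet (K : Set G))),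
          ∀ hxH : x ∈ H, f ⟨x, hxH⟩ ∈ N := by
        intro x hx
        induction hx using Subgroup.closure_induction with
        | mem y hy =>
          intro hyH
          obtain ⟨k, hk, hcj⟩ := Group.mem_conjugatesOfSet_iff.mp hy
          obtain ⟨c, hc⟩ := isConj_iff.mp hcj
          obtain ⟨h, hh, t, ht, hct⟩ := hdecomp c
          -- y = h * (t * k * t⁻¹) * h⁻¹ with t*k*t⁻¹ ∈ K
          have htk : t * k * t⁻¹ ∈ K := hKnorm t (hTle ht) k hk
          have hyeq : y = h * (t * k * t⁻¹) * h⁻¹ := by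
            rw [← hc, hct]; group
          have hkH : t * k * t⁻¹ ∈ H := hKH htk
          have hsub : (⟨y, hyH⟩ : H) = ⟨h, hh⟩ * ⟨t * k * t⁻¹, hkH⟩ * (⟨h, hh⟩)⁻¹ := by
            ext; simp [hyeq]
          rw [hsub, map_mul, map_mul, map_inv]
          have hfk : f ⟨t * k * t⁻¹, hkH⟩ ∈ K := hKinv _ hkH htk
          have hfh : f ⟨h, hh⟩ ∈ f.range := ⟨⟨h, hh⟩, rfl⟩
          have : f ⟨h, hh⟩ * f ⟨t * k * t⁻¹, hkH⟩ * (f ⟨h, hh⟩)⁻¹ ∈ K :=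
            hKnorm _ hfh _ hfk
          exact Subgroup.subset_normalClosure this
        | one =>
          intro h1H
          have : (⟨(1 : G), h1H⟩ : H) = 1 := rfl
          rw [this, map_one]; exact N.one_mem
        | mul u v hu hv ihu ihv =>
          intro huvH
          have huH : u ∈ H := hNH hu
          have hvH : v ∈ H := hNH hv
          have : (⟨u * v, huvH⟩ : H) = ⟨u, huH⟩ * ⟨v, hvH⟩ := rfl
          rw [this, map_mul]
          exact N.mul_mem (ihu huH) (ihv hvH)
        | inv u hu ihu =>
          intro huiH
          have huH : u ∈ H := hNH hu
          have : (⟨u⁻¹, huiH⟩ : H) = (⟨u, huH⟩)⁻¹ := rfl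
          rw [this, map_inv]
          exact N.inv_mem (ihu huH)
      intro x hx hxN
      exact key x hxN hx
    have hNbot : N = ⊥ := hsimple N hNH hNnorm hNinv
    have : K ≤ N := Subgroup.subset_normalClosure
    rw [hNbot] at this
    exact le_bot_iff.mp this
end

section
/- Let G be a group and f : H → G a simple virtual endomorphism of degree p (H has index p in G, and no nontrivial subgroup of H normal in G is f-invariant). Then for any n, every element of H satisfies h^{p^n} = 1 if and only if every element of f(H) satisfies g^{p^n} = 1. -/
lemma aux_normal_of_index_prime {p : ℕ} (hp : p.Prime) {G : Type*} [Group G] [Finite G]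
    (hG : IsPGroup p G) (H : Subgroup G) (hidx : H.index = p) : H.Normal := by
  haveI : Fact p.Prime := ⟨hp⟩
  haveI : Group.IsNilpotent G := hG.isNilpotent
  have hnc : NormalizerCondition G := normalizerCondition_of_isNilpotent
  refine Subgroup.NormalizerCondition.normal_of_coatom H hnc ⟨?_, ?_⟩
  · intro htop
    rw [htop, Subgroup.index_top] at hidx
    exact hp.one_lt.ne hidx
  · intro K hK
    have hle : H ≤ K := hK.le
    have heq := Subgroup.relIndex_mul_index hle
    rw [hidx] at heq
    rcases (Nat.Prime.eq_one_or_self_of_dvd hp K.index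
        ⟨H.relIndex K, by rw [← heq, mul_comm]⟩) with h | h
    · exact Subgroup.index_eq_one.mp h
    · exfalso
      rw [h] at heq
      have hrel : H.relIndex K = 1 := by
        have hp0 : p ≠ 0 := hp.pos.ne'
        have := mul_right_cancel₀ hp0 (heq.trans (one_mul p).symm)
        exact this
      exact hK.ne (le_antisymm hle (Subgroup.relIndex_eq_one.mp hrel))

/-- Theorem 2.6: if `f : H → G` is a simple virtual endomorphism
of degree `p` of a finite `p`-group `G`, then `H^{p^n} = 1` if and only if
`f(H)^{p^n} = 1`. -/
theorem stmt3 (p : ℕ) (hp : p.Prime) (G : Type*) [Group G] [Finite G]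
    (hG : IsPGroup p G) (H : Subgroup G) (hidx : H.index = p) (f : H →* G)
    (hsimple : ∀ K : Subgroup G, K ≤ H → K.Normal →
      (∀ k (hk : k ∈ H), k ∈ K → f ⟨k, hk⟩ ∈ K) → K = ⊥)
    (n : ℕ) :
    (∀ h : H, (h : G) ^ p ^ n = 1) ↔ (∀ g ∈ f.range, g ^ p ^ n = 1) := by
  have hHnormal : H.Normal := aux_normal_of_index_prime hp hG H hidx
  constructor
  · rintro hH g ⟨h, rfl⟩
    rw [← map_pow]
    have : h ^ p ^ n = 1 := by
      ext
      simpa using hH h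
    rw [this, map_one]
  · intro hf h
    -- the set of p^n-th powers of elements of H
    set S : Set G := {g : G | ∃ x : G, ∃ hx : x ∈ H, g = x ^ p ^ n} with hS
    set K : Subgroup G := Subgroup.closure S with hK
    have hSsubH : S ⊆ (H : Set G) := by
      rintro g ⟨x, hx, rfl⟩
      exact H.pow_mem hx _
    have hKH : K ≤ H := (Subgroup.closure_le H).mpr hSsubH
    have hKnormal : K.Normal := by
      constructor
      intro a ha g
      induction ha using Subgroup.closure_induction with
      | mem x hx =>
          obtain ⟨y, hy, rfl⟩ := hx
          have : g * y ^ p ^ n * g⁻¹ = (g * y * g⁻¹) ^ p ^ n := by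
            rw [← conj_pow]
          rw [this]
          exact Subgroup.subset_closure ⟨g * y * g⁻¹, hHnormal.conj_mem y hy g, rfl⟩
      | one => simpa using K.one_mem
      | mul x y _ _ hx hy =>
          have : g * (x * y) * g⁻¹ = (g * x * g⁻¹) * (g * y * g⁻¹) := by group
          rw [this]; exact K.mul_mem hx hy
      | inv x _ hx =>
          have : g * x⁻¹ * g⁻¹ = (g * x * g⁻¹)⁻¹ := by group
          rw [this]; exact K.inv_mem hx
    -- every element of K lies in the image of the kernel of f
    have hKker : K ≤ (f.ker).map H.subtype := by
      rw [hK, Subgroup.closure_le]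
      rintro g ⟨x, hx, rfl⟩
      refine ⟨(⟨x, hx⟩ : H) ^ p ^ n, ?_, rfl⟩
      have : f ((⟨x, hx⟩ : H) ^ p ^ n) = (f ⟨x, hx⟩) ^ p ^ n := map_pow f _ _
      show _ ∈ f.ker
      rw [MonoidHom.mem_ker, this]
      exact hf _ ⟨⟨x, hx⟩, rfl⟩
    have hKinv : ∀ k (hk : k ∈ H), k ∈ K → f ⟨k, hk⟩ ∈ K := by
      intro k hk hkK
      obtain ⟨x, hxker, hxeq⟩ := hKker hkK
      have : (⟨k, hk⟩ : H) = x := by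
        ext; simp [← hxeq]
      rw [this, hxker]
      exact K.one_mem
    have hKbot : K = ⊥ := hsimple K hKH hKnormal hKinv
    have : (h : G) ^ p ^ n ∈ K :=
      Subgroup.subset_closure ⟨(h : G), h.2, rfl⟩
    rw [hKbot, Subgroup.mem_bot] at this
    exact this
end

section
/- Let G be a group, H a normal subgroup of index p, f : H → G a simple virtual endomorphism, and suppose the set {g ∈ G | g^{p^n} = 1} is a subgroup of G that intersects H trivially. If additionally G = H × ⟨a⟩ with a of order p (the extension splits as a direct product), then H^p is an f-invariant normal subgroup of G, hence H^p = 1 and G has exponent p. -/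
open Pointwise

/-- base case of the induction in Theorem 1: if `f : H → G` is a
simple virtual endomorphism of degree `p`, the set of `p^n`-torsion elements is
a subgroup meeting `H` trivially, and `G = H × ⟨a⟩` with `a` of order `p`, then
`H^p = 1` and `G` has exponent `p`. -/
theorem stmt4 (p : ℕ) (hp : p.Prime) (G : Type*) [Group G] [Finite G]
    (hG : IsPGroup p G) (H : Subgroup G) [H.Normal] (hidx : H.index = p)
    (f : H →* G)
    (hsimple : ∀ K : Subgroup G, K ≤ H → K.Normal →
      (∀ k (hk : k ∈ H), k ∈ K → f ⟨k, hk⟩ ∈ K) → K = ⊥)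
    (n : ℕ) (Ω : Subgroup G) (hΩ : (Ω : Set G) = {g : G | g ^ p ^ n = 1})
    (hΩH : Ω ⊓ H = ⊥)
    (a : G) (haord : orderOf a = p)
    (hsup : H ⊔ Subgroup.zpowers a = ⊤) (hinf : H ⊓ Subgroup.zpowers a = ⊥)
    (hcomm : ∀ h ∈ H, Commute h a) :
    (∀ h : H, (h : G) ^ p = 1) ∧ ∀ g : G, g ^ p = 1 := by
  have hap : a ^ p = 1 := by rw [← haord]; exact pow_orderOf_eq_one a
  -- the subgroup of H generated by p-th powers, as subgroup of H
  set T : Set H := (fun x => x ^ p) '' Set.univ with hT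
  set KH : Subgroup H := Subgroup.closure T with hKH
  set K : Subgroup G := KH.map H.subtype with hKdef
  set S : Set G := (fun x => x ^ p) '' (H : Set G) with hS
  have hK : K = Subgroup.closure S := by
    rw [hKdef, hKH, MonoidHom.map_closure]
    congr 1
    ext g
    constructor
    · rintro ⟨_, ⟨x, -, rfl⟩, rfl⟩
      exact ⟨x, x.2, rfl⟩
    · rintro ⟨x, hx, rfl⟩
      exact ⟨(⟨x, hx⟩ : H) ^ p, ⟨⟨x, hx⟩, trivial, rfl⟩, rfl⟩
  have hKH_le : K ≤ H := by
    rw [hK, Subgroup.closure_le]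
    rintro _ ⟨x, hx, rfl⟩
    exact pow_mem hx p
  -- every p-th power lies in K
  have hgp : ∀ g : G, g ^ p ∈ K := by
    intro g
    have hg : g ∈ ((H : Set G) * (Subgroup.zpowers a : Set G)) := by
      rw [← Subgroup.normal_mul, hsup]
      trivial
    obtain ⟨h, hh, z, hz, rfl⟩ := hg
    obtain ⟨m, rfl⟩ := hz
    have hc : Commute h (a ^ m) := (hcomm h hh).zpow_right m
    have hzp : (a ^ m) ^ p = 1 := by
      rw [← zpow_natCast, ← zpow_mul, mul_comm, zpow_mul, zpow_natCast, hap, one_zpow]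
    rw [hc.mul_pow, hzp, mul_one, hK]
    exact Subgroup.subset_closure ⟨h, hh, rfl⟩
  have hKnorm : K.Normal := by
    constructor
    intro k hk g
    rw [hK] at hk ⊢
    have : Subgroup.map (MulAut.conj g).toMonoidHom (Subgroup.closure S) ≤ Subgroup.closure S := by
      rw [MonoidHom.map_closure, Subgroup.closure_le]
      rintro _ ⟨_, ⟨x, hx, rfl⟩, rfl⟩
      have : (MulAut.conj g).toMonoidHom (x ^ p) = (g * x * g⁻¹) ^ p := by
        simp [mul_pow]
      rw [this]
      exact Subgroup.subset_closure ⟨g * x * g⁻¹, Subgroup.Normal.conj_mem ‹H.Normal› x hx g, rfl⟩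
    exact this ⟨k, hk, rfl⟩
  have hfinv : ∀ k (hk : k ∈ H), k ∈ K → f ⟨k, hk⟩ ∈ K := by
    intro k hk hkK
    obtain ⟨y, hy, hyk⟩ := hkK
    have : (⟨k, hk⟩ : H) = y := Subtype.ext hyk.symm
    rw [this]
    have : Subgroup.map f KH ≤ K := by
      rw [hKH, MonoidHom.map_closure, Subgroup.closure_le]
      rintro _ ⟨_, ⟨x, -, rfl⟩, rfl⟩
      rw [map_pow]
      exact hgp (f x)
    exact this ⟨y, hy, rfl⟩
  have hKbot : K = ⊥ := hsimple K hKH_le hKnorm hfinv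
  have h1 : ∀ h : H, (h : G) ^ p = 1 := by
    intro h
    have := hgp (h : G)
    rw [hKbot, Subgroup.mem_bot] at this
    exact this
  refine ⟨h1, fun g => ?_⟩
  have := hgp g
  rw [hKbot, Subgroup.mem_bot] at this
  exact this
end

section
/- Let G be an extraspecial p-group of exponent p and order at least p^5. Then G admits no simple virtual endomorphism of degree p: for every maximal subgroup H of G and every homomorphism f : H → G, there exists a nontrivial subgroup K of H that is normal in G and satisfies f(K) ≤ K. (Indeed K = [H,H] = [G,G] works.) -/
open scoped commutatorElement

/-- an extraspecial `p`-group of exponent `p` and order at least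
`p^5` admits no simple virtual endomorphism of degree `p`: for every maximal
subgroup `H` and every homomorphism `f : H → G` there is a nontrivial subgroup
`K ≤ H`, normal in `G`, with `f(K) ≤ K`. -/
theorem stmt9 (p : ℕ) (hp : p.Prime) (G : Type*) [Group G] [Finite G]
    (hG : IsPGroup p G)
    (hcenter : Subgroup.center G = commutator G)
    (hcard : Nat.card (Subgroup.center G) = p)
    (hexp : ∀ g : G, g ^ p = 1)
    (horder : p ^ 5 ≤ Nat.card G)
    (H : Subgroup G) (hidx : H.index = p) (f : H →* G) :
    ∃ K : Subgroup G, K ≠ ⊥ ∧ K ≤ H ∧ K.Normal ∧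
      ∀ k (hk : k ∈ H), k ∈ K → f ⟨k, hk⟩ ∈ K := by
  classical
  have hp2 : 2 ≤ p := hp.two_le
  have hpos : 0 < p := hp.pos
  -- every commutator is central
  have hcent : ∀ a b : G, ⁅a, b⁆ ∈ Subgroup.center G := by
    intro a b
    rw [hcenter]
    exact Subgroup.commutator_mem_commutator (Subgroup.mem_top a) (Subgroup.mem_top b)
  -- H is not abelian
  have hHne : ∃ a b : H, ¬ ((a : G) * b = b * a) := by
    by_contra hab
    push_neg at hab
    -- choose g ∉ H
    have hHtop : H ≠ ⊤ := by
      intro h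
      rw [h, Subgroup.index_top] at hidx
      exact hp.one_lt.ne' hidx.symm
    obtain ⟨g, hg⟩ : ∃ g : G, g ∉ H := by
      by_contra h
      push_neg at h
      exact hHtop ((Subgroup.eq_top_iff' H).mpr h)
    -- H ⊔ ⟨g⟩ = ⊤
    have hsup : H ⊔ Subgroup.zpowers g = ⊤ := by
      have hle : H ≤ H ⊔ Subgroup.zpowers g := le_sup_left
      have hdvd : (H ⊔ Subgroup.zpowers g).index ∣ p := hidx ▸ Subgroup.index_dvd_of_le hle
      rcases (Nat.Prime.eq_one_or_self_of_dvd hp _ hdvd) with h1 | h1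
      · exact Subgroup.index_eq_one.mp h1
      · exfalso
        have := Subgroup.relIndex_mul_index hle
        rw [h1, hidx] at this
        have hrel : H.relIndex (H ⊔ Subgroup.zpowers g) = 1 :=
          Nat.eq_of_mul_eq_mul_right hpos (by rw [this, one_mul])
        have := Subgroup.relIndex_eq_one.mp hrel
        exact hg (this (le_sup_right (a := H) (Subgroup.mem_zpowers g)))
    -- the commutator-with-g homomorphism
    have hmul : ∀ a b : H, ⁅((a*b : H) : G), g⁆ = ⁅(a : G), g⁆ * ⁅(b : G), g⁆ := by
      intro a b
      have hb := Subgroup.mem_center_iff.mp (hcent (b : G) g)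
      have ha := Subgroup.mem_center_iff.mp (hcent (a : G) g)
      have h1 : ⁅((a*b : H) : G), g⁆ = (a : G) * ⁅(b : G), g⁆ * (a : G)⁻¹ * ⁅(a : G), g⁆ := by
        push_cast
        group
      rw [h1, hb (a : G), mul_inv_cancel_right]
      exact ha ⁅(b : G), g⁆
    let φ : H →* G := { toFun := fun h => ⁅(h : G), g⁆,
                        map_one' := by simp,
                        map_mul' := hmul }
    -- kernel of φ is central
    have hker : ∀ x : H, φ x = 1 → (x : G) ∈ Subgroup.center G := by
      intro x hx
      rw [Subgroup.mem_center_iff]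
      have hcl : (⊤ : Subgroup G) ≤ Subgroup.centralizer {(x : G)} := by
        rw [← hsup]
        refine sup_le ?_ (Subgroup.zpowers_le.mpr ?_)
        · intro y hy
          rw [Subgroup.mem_centralizer_singleton_iff]
          exact (hab ⟨y, hy⟩ x)
        · rw [Subgroup.mem_centralizer_singleton_iff]
          have h1 : ⁅(x : G), g⁆ = 1 := hx
          exact (commutatorElement_eq_one_iff_commute.mp h1).symm
      intro y
      exact Subgroup.mem_centralizer_singleton_iff.mp (hcl (Subgroup.mem_top y))
    -- counting
    have hcardH : Nat.card H * p = Nat.card G := by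
      rw [← hidx]; exact Subgroup.card_mul_index H
    have hH4 : p ^ 4 ≤ Nat.card H := by
      have : p ^ 4 * p ≤ Nat.card H * p := by
        rw [hcardH, ← pow_succ]; exact horder
      exact Nat.le_of_mul_le_mul_right this hpos
    have hkcard : Nat.card φ.ker ≤ p := by
      have hle : (φ.ker.map H.subtype) ≤ Subgroup.center G := by
        rintro x ⟨y, hy, rfl⟩
        exact hker y hy
      have := Subgroup.card_le_of_le hle
      rw [hcard] at this
      have heq : Nat.card φ.ker = Nat.card (φ.ker.map H.subtype) :=
        Nat.card_congr (Subgroup.equivMapOfInjective φ.ker H.subtype H.subtype_injective).toEquiv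
      omega
    have hrcard : Nat.card φ.range ≤ p := by
      have hle : φ.range ≤ Subgroup.center G := by
        rintro x ⟨y, rfl⟩
        exact hcent _ _
      have := Subgroup.card_le_of_le hle
      omega
    have hq : Nat.card (H ⧸ φ.ker) = Nat.card φ.range :=
      Nat.card_congr (QuotientGroup.quotientKerEquivRange φ).toEquiv
    have hsplit : Nat.card H = Nat.card (H ⧸ φ.ker) * Nat.card φ.ker :=
      Subgroup.card_eq_card_quotient_mul_card_subgroup φ.ker
    have hle2 : Nat.card H ≤ p * p := by
      rw [hsplit, hq]
      exact Nat.mul_le_mul hrcard hkcard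
    have : p ^ 4 ≤ p * p := le_trans hH4 hle2
    have : p ^ 4 < p ^ 4 := by
      calc p ^ 4 ≤ p * p := this
        _ = p ^ 2 := (sq p).symm
        _ < p ^ 4 := Nat.pow_lt_pow_right hp.one_lt (by norm_num)
    exact lt_irrefl _ this
  -- the image of the commutator subgroup of H
  obtain ⟨a, b, hab⟩ := hHne
  set M : Subgroup G := (commutator ↥H).map H.subtype with hM
  have hMle : M ≤ Subgroup.center G := by
    rw [hM, commutator_def, Subgroup.map_commutator, hcenter, commutator_def]
    exact Subgroup.commutator_mono le_top le_top
  have hMne : M ≠ ⊥ := by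
    intro h
    have hmem : (⁅a, b⁆ : H) ∈ commutator ↥H :=
      Subgroup.commutator_mem_commutator (Subgroup.mem_top a) (Subgroup.mem_top b)
    have : H.subtype ⁅a, b⁆ ∈ M := Subgroup.mem_map_of_mem _ hmem
    rw [h, Subgroup.mem_bot] at this
    have : (⁅(a : G), (b : G)⁆ : G) = 1 := this
    exact hab (commutatorElement_eq_one_iff_commute.mp this)
  -- M has card dividing p and > 1, so card M = p, hence M = center G
  have hMcard : Nat.card M = p := by
    have hdvd : Nat.card M ∣ Nat.card (Subgroup.center G) := by
      have := Subgroup.card_subgroup_dvd_card (M.subgroupOf (Subgroup.center G))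
      rwa [Nat.card_congr (Subgroup.subgroupOfEquivOfLe hMle).toEquiv] at this
    rw [hcard] at hdvd
    rcases (Nat.Prime.eq_one_or_self_of_dvd hp _ hdvd) with h1 | h1
    · exfalso
      exact hMne (Subgroup.eq_bot_of_card_eq M h1)
    · exact h1
  have hMeq : M = Subgroup.center G :=
    Subgroup.eq_of_le_of_card_ge hMle (by rw [hMcard, hcard])
  refine ⟨M, hMne, ?_, ?_, ?_⟩
  · rw [hM]
    rintro x ⟨y, _, rfl⟩
    exact y.2
  · rw [hMeq]; infer_instance
  · intro k hk hkM
    rw [hM] at hkM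
    obtain ⟨y, hy, hyk⟩ := hkM
    have hyeq : y = ⟨k, hk⟩ := Subtype.ext hyk
    rw [hyeq] at hy
    have : f ⟨k, hk⟩ ∈ (commutator ↥H).map f := Subgroup.mem_map_of_mem _ hy
    have hle : (commutator ↥H).map f ≤ M := by
      rw [commutator_def, Subgroup.map_commutator, hMeq, hcenter, commutator_def]
      exact Subgroup.commutator_mono le_top le_top
    exact hle this
end

section
/- Let G be a group with a subgroup H of index p and f : H → G a homomorphism, and suppose G = H ⋊ ⟨a⟩ with a ∈ f(H) \ H of order p. If K ≤ H ∩ f(H) is normal in f(H) with f(K) ≤ K, then K ≤ (f⁻¹(K))^g for every g ∈ G, where f⁻¹(K) = {h ∈ H | f(h) ∈ K}. -/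
/-- key step of Lemma 2.5: suppose `G = H ⋊ ⟨a⟩` with `H` of
index `p`, `a ∈ f(H) \ H` of order `p`. If `K ≤ H ∩ f(H)` is normal in `f(H)`
and `f(K) ≤ K`, then `K ≤ (f⁻¹(K))^g` for every `g ∈ G`. -/
theorem stmt10 (p : ℕ) (hp : p.Prime) (G : Type*) [Group G]
    (H : Subgroup G) [H.Normal] (hidx : H.index = p) (f : H →* G)
    (a : G) (ha : a ∈ f.range) (hanotH : a ∉ H) (haord : orderOf a = p)
    (hsup : H ⊔ Subgroup.zpowers a = ⊤)
    (K : Subgroup G) (hKle : K ≤ H ⊓ f.range)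
    (hKnormal : ∀ x ∈ f.range, ∀ k ∈ K, x * k * x⁻¹ ∈ K)
    (hKinv : ∀ k (hk : k ∈ H), k ∈ K → f ⟨k, hk⟩ ∈ K) :
    ∀ g : G, ∀ k ∈ K, g * k * g⁻¹ ∈ (K.comap f).map H.subtype := by
  intro g k hk
  -- decompose g = h * b with h ∈ H, b ∈ zpowers a
  have hg : g ∈ ((H ⊔ Subgroup.zpowers a : Subgroup G) : Set G) := by
    rw [hsup]; trivial
  rw [Subgroup.normal_mul] at hg
  obtain ⟨h, hh, b, hb, rfl⟩ := hg
  have hbr : b ∈ f.range := by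
    rcases Subgroup.mem_zpowers_iff.mp hb with ⟨n, rfl⟩
    exact zpow_mem ha n
  -- conjugate k by b stays in K
  have hk1 : b * k * b⁻¹ ∈ K := hKnormal b hbr k hk
  set k' := b * k * b⁻¹ with hk'def
  have hk'H : k' ∈ H := (hKle hk1).1
  have heq : h * b * k * (h * b)⁻¹ = h * k' * h⁻¹ := by
    rw [hk'def]; group
  rw [heq]
  have hmemH : h * k' * h⁻¹ ∈ H := by
    exact H.mul_mem (H.mul_mem hh hk'H) (H.inv_mem hh)
  refine ⟨⟨h * k' * h⁻¹, hmemH⟩, ?_, rfl⟩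
  have : (⟨h * k' * h⁻¹, hmemH⟩ : H) = ⟨h, hh⟩ * ⟨k', hk'H⟩ * (⟨h, hh⟩)⁻¹ := rfl
  rw [this]
  simp only [SetLike.mem_coe, Subgroup.mem_comap, map_mul, map_inv]
  exact hKnormal (f ⟨h, hh⟩) ⟨_, rfl⟩ _ (hKinv k' hk'H hk1)
end

section
/- Let G be a group with a simple virtual endomorphism f : H → G of degree p. If H^{p^n} = 1 (every element of H has order dividing p^n), then any characteristic subgroup of H contained in ker f and normal in G must be trivial; in particular, H^{p^n} being contained in ker f and normal in G forces H^{p^n} = 1 whenever f(H)^{p^n} = 1. -/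
/-- Theorem 2.6: for a simple virtual endomorphism `f : H → G`
of degree `p` of a finite `p`-group with `H` normal in `G`: any subgroup of `H`
normal in `G` and contained in `ker f` is trivial; in particular, if
`f(H)^{p^n} = 1` then `H^{p^n} = 1`. -/
theorem stmt12 (p : ℕ) (hp : p.Prime) (G : Type*) [Group G] [Finite G]
    (hG : IsPGroup p G) (H : Subgroup G) [H.Normal] (hidx : H.index = p)
    (f : H →* G)
    (hsimple : ∀ K : Subgroup G, K ≤ H → K.Normal →
      (∀ k (hk : k ∈ H), k ∈ K → f ⟨k, hk⟩ ∈ K) → K = ⊥)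
    (n : ℕ) :
    (∀ K : Subgroup G, K ≤ H → K.Normal →
        (∀ k (hk : k ∈ H), k ∈ K → f ⟨k, hk⟩ = 1) → K = ⊥) ∧
      ((∀ g ∈ f.range, g ^ p ^ n = 1) → ∀ h ∈ H, h ^ p ^ n = 1) := by
  have part1 : ∀ K : Subgroup G, K ≤ H → K.Normal →
      (∀ k (hk : k ∈ H), k ∈ K → f ⟨k, hk⟩ = 1) → K = ⊥ := by
    intro K hKH hKn hker
    exact hsimple K hKH hKn (fun k hk hkK => by rw [hker k hk hkK]; exact K.one_mem)
  refine ⟨part1, ?_⟩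
  intro hr h hH
  set S : Set G := {g | ∃ x ∈ H, g = x ^ p ^ n} with hS
  set K := Subgroup.closure S with hK
  have hSH : S ⊆ (H : Set G) := by
    rintro g ⟨x, hx, rfl⟩; exact pow_mem hx _
  have hKH : K ≤ H := (Subgroup.closure_le H).2 hSH
  have hKn : K.Normal := by
    constructor
    intro x hx g
    induction hx using Subgroup.closure_induction with
    | mem y hy =>
      obtain ⟨z, hz, rfl⟩ := hy
      refine Subgroup.subset_closure ⟨g * z * g⁻¹, ‹H.Normal›.conj_mem z hz g, ?_⟩
      rw [conj_pow]
    | one => simpa using K.one_mem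
    | mul y z hy hz ihy ihz =>
      have : g * (y * z) * g⁻¹ = (g * y * g⁻¹) * (g * z * g⁻¹) := by group
      rw [this]; exact K.mul_mem ihy ihz
    | inv y hy ihy =>
      have : g * y⁻¹ * g⁻¹ = (g * y * g⁻¹)⁻¹ := by group
      rw [this]; exact K.inv_mem ihy
  have hker : ∀ k (hk : k ∈ H), k ∈ K → f ⟨k, hk⟩ = 1 := by
    intro k hk hkK
    induction hkK using Subgroup.closure_induction with
    | mem y hy =>
      obtain ⟨z, hz, rfl⟩ := hy
      have : (⟨z ^ p ^ n, hk⟩ : H) = (⟨z, hz⟩ : H) ^ p ^ n := by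
        ext; simp
      rw [this, map_pow]
      exact hr _ ⟨⟨z, hz⟩, rfl⟩
    | one =>
      have : (⟨(1 : G), hk⟩ : H) = 1 := by ext; simp
      rw [this, map_one]
    | mul y z hy hz ihy ihz =>
      have hyH : y ∈ H := hKH hy
      have hzH : z ∈ H := hKH hz
      have : (⟨y * z, hk⟩ : H) = ⟨y, hyH⟩ * ⟨z, hzH⟩ := rfl
      rw [this, map_mul, ihy hyH, ihz hzH, one_mul]
    | inv y hy ihy =>
      have hyH : y ∈ H := hKH hy
      have : (⟨y⁻¹, hk⟩ : H) = (⟨y, hyH⟩ : H)⁻¹ := rfl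
      rw [this, map_inv, ihy hyH, inv_one]
  have hbot : K = ⊥ := part1 K hKH hKn hker
  have : h ^ p ^ n ∈ K := Subgroup.subset_closure ⟨h, hH, rfl⟩
  rw [hbot, Subgroup.mem_bot] at this
  exact this
end

section
/- Let G be the Heisenberg group over F_p, with presentation ⟨a, b | [a,b] = c, [a,c] = [b,c] = a^p = b^p = c^p = 1⟩, let H = ⟨a, c⟩ and let f : H → G be the homomorphism determined by a ↦ c, c ↦ b. Then f is a well-defined homomorphism, [G : H] = p, and f is simple: the only subgroup K ≤ H normal in G with f(K) ≤ K is trivial. Hence G is self-similar of degree p. -/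
open scoped commutatorElement

/-- The Heisenberg group over `F_p`: triples `(x, y, z)` with the multiplication
`(x, y, z) * (x', y', z') = (x + x', y + y', z + z' + x * y')`. This is the
group with presentation
`⟨a, b | [a,b] = c, [a,c] = [b,c] = aᵖ = bᵖ = cᵖ = 1⟩`. -/
@[ext]
structure Heis (p : ℕ) where
  x : ZMod p
  y : ZMod p
  z : ZMod p

namespace Heis

variable {p : ℕ}

instance : Mul (Heis p) :=
  ⟨fun g h => ⟨g.x + h.x, g.y + h.y, g.z + h.z + g.x * h.y⟩⟩

instance : One (Heis p) := ⟨⟨0, 0, 0⟩⟩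

instance : Inv (Heis p) := ⟨fun g => ⟨-g.x, -g.y, -g.z + g.x * g.y⟩⟩

@[simp] lemma mul_x (g h : Heis p) : (g * h).x = g.x + h.x := rfl
@[simp] lemma mul_y (g h : Heis p) : (g * h).y = g.y + h.y := rfl
@[simp] lemma mul_z (g h : Heis p) : (g * h).z = g.z + h.z + g.x * h.y := rfl
@[simp] lemma one_x : (1 : Heis p).x = 0 := rfl
@[simp] lemma one_y : (1 : Heis p).y = 0 := rfl
@[simp] lemma one_z : (1 : Heis p).z = 0 := rfl
@[simp] lemma inv_x (g : Heis p) : g⁻¹.x = -g.x := rfl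
@[simp] lemma inv_y (g : Heis p) : g⁻¹.y = -g.y := rfl
@[simp] lemma inv_z (g : Heis p) : g⁻¹.z = -g.z + g.x * g.y := rfl

instance : Group (Heis p) where
  mul_assoc g h k := by ext <;> simp <;> ring
  one_mul g := by ext <;> simp
  mul_one g := by ext <;> simp
  inv_mul_cancel g := by ext <;> simp

/-- The generator `a`. -/
def a : Heis p := ⟨1, 0, 0⟩

/-- The generator `b`. -/
def b : Heis p := ⟨0, 1, 0⟩

/-- The central element `c = [a, b]`. -/
def c : Heis p := ⁅(a : Heis p), b⁆

-- auxiliary lemmas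
lemma c_def : (c : Heis p) = ⟨0, 0, 1⟩ := by
  ext <;> simp [c, a, b, commutatorElement_def]

lemma a_pow (n : ℕ) : (a : Heis p) ^ n = ⟨(n : ZMod p), 0, 0⟩ := by
  induction n with
  | zero => ext <;> simp
  | succ n ih => rw [pow_succ, ih]; ext <;> simp [a] <;> push_cast <;> ring

lemma b_pow (n : ℕ) : (b : Heis p) ^ n = ⟨0, (n : ZMod p), 0⟩ := by
  induction n with
  | zero => ext <;> simp
  | succ n ih => rw [pow_succ, ih]; ext <;> simp [b] <;> push_cast <;> ring

lemma c_pow (n : ℕ) : (c : Heis p) ^ n = ⟨0, 0, (n : ZMod p)⟩ := by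
  induction n with
  | zero => ext <;> simp
  | succ n ih => rw [pow_succ, ih]; ext <;> simp [c_def] <;> push_cast <;> ring

lemma y_eq_zero_of_mem {g : Heis p} (hg : g ∈ Subgroup.closure {a, c}) : g.y = 0 := by
  induction hg using Subgroup.closure_induction with
  | mem x hx => rcases hx with rfl | rfl <;> simp [a, c_def]
  | one => simp
  | mul x y hx hy ihx ihy => simp [ihx, ihy]
  | inv x hx ih => simp [ih]

lemma mem_closure_of_y_eq_zero [NeZero p] {g : Heis p} (hg : g.y = 0) :
    g ∈ Subgroup.closure ({a, c} : Set (Heis p)) := by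
  have ha : (a : Heis p) ∈ Subgroup.closure ({a, c} : Set (Heis p)) :=
    Subgroup.subset_closure (by simp)
  have hc : (c : Heis p) ∈ Subgroup.closure ({a, c} : Set (Heis p)) :=
    Subgroup.subset_closure (by simp)
  have : g = a ^ g.x.val * c ^ g.z.val := by
    ext <;> simp [a_pow, c_pow, ZMod.natCast_val, ZMod.cast_id, hg]
  rw [this]
  exact mul_mem (pow_mem ha _) (pow_mem hc _)

def fHom : (Subgroup.closure {(a : Heis p), c}) →* Heis p where
  toFun g := ⟨0, g.1.z, g.1.x⟩
  map_one' := by ext <;> simp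
  map_mul' g h := by
    have hy : (h : Heis p).y = 0 := y_eq_zero_of_mem h.2
    ext <;> simp [hy]

lemma fHom_apply (g : (Subgroup.closure {(a : Heis p), c})) :
    fHom g = ⟨0, g.1.z, g.1.x⟩ := rfl

def yHom : Heis p →* Multiplicative (ZMod p) where
  toFun g := Multiplicative.ofAdd g.y
  map_one' := rfl
  map_mul' g h := rfl


end Heis

open Heis in
/-- Example 2.3: for the Heisenberg group `G` over `F_p`, with
`a, b` its standard generators, `c = [a,b]`, and `H = ⟨a, c⟩`, the relations of
the presentation hold, `[G : H] = p`, and the homomorphism `f : H → G`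
determined by `a ↦ c`, `c ↦ b` exists, is unique, and is simple; hence `G` is
self-similar of degree `p`. -/
theorem stmt15 (p : ℕ) (hp : p.Prime) :
    -- the relations of the presentation hold
    (a : Heis p) ^ p = 1 ∧ (b : Heis p) ^ p = 1 ∧ (c : Heis p) ^ p = 1 ∧
    ⁅(a : Heis p), (c : Heis p)⁆ = 1 ∧ ⁅(b : Heis p), (c : Heis p)⁆ = 1 ∧
    -- `H = ⟨a, c⟩` has index `p` and carries a unique homomorphism `f` with
    -- `a ↦ c`, `c ↦ b`, and `f` is simple
    (Subgroup.closure {(a : Heis p), c}).index = p ∧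
    ∃! f : (Subgroup.closure {(a : Heis p), c}) →* Heis p,
      f ⟨a, Subgroup.subset_closure (by simp)⟩ = c ∧
      f ⟨c, Subgroup.subset_closure (by simp)⟩ = b ∧
      ∀ K : Subgroup (Heis p), K ≤ Subgroup.closure {(a : Heis p), c} → K.Normal →
        (∀ k (hk : k ∈ Subgroup.closure {(a : Heis p), c}), k ∈ K → f ⟨k, hk⟩ ∈ K) →
        K = ⊥ := by
  haveI : NeZero p := ⟨hp.ne_zero⟩
  refine ⟨?_, ?_, ?_, ?_, ?_, ?_, ?_⟩
  · rw [a_pow]; ext <;> simp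
  · rw [b_pow]; ext <;> simp
  · rw [c_pow]; ext <;> simp
  · ext <;> simp [commutatorElement_def, a, c_def]
  · ext <;> simp [commutatorElement_def, b, c_def]
  · -- index
    have hker : Subgroup.closure {(a : Heis p), c} = (yHom (p := p)).ker := by
      ext g
      constructor
      · intro hg
        simpa [yHom, MonoidHom.mem_ker] using y_eq_zero_of_mem hg
      · intro hg
        exact mem_closure_of_y_eq_zero (by simpa [yHom, MonoidHom.mem_ker] using hg)
    have hsurj : Function.Surjective (yHom (p := p)) :=
      fun z => ⟨⟨0, z.toAdd, 0⟩, rfl⟩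
    rw [hker, Subgroup.index_ker, MonoidHom.range_eq_top.mpr hsurj,
      Nat.card_congr Subgroup.topEquiv.toEquiv, Nat.card_congr Multiplicative.toAdd,
      Nat.card_zmod]
  · refine ⟨fHom, ⟨?_, ?_, ?_⟩, ?_⟩
    · rw [fHom_apply]; ext <;> simp [a, c_def]
    · rw [fHom_apply]; ext <;> simp [b, c_def]
    · -- simplicity
      intro K hKH hKnorm hKinv
      rw [Subgroup.eq_bot_iff_forall]
      have hz : ∀ m ∈ K, m.z = 0 := by
        intro m hm
        have h1 : fHom ⟨m, hKH hm⟩ ∈ K := hKinv m (hKH hm) hm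
        have h2 := y_eq_zero_of_mem (hKH h1)
        simpa [fHom_apply] using h2
      intro k hk
      have hy : k.y = 0 := y_eq_zero_of_mem (hKH hk)
      have hzk : k.z = 0 := hz k hk
      have hconj : b * k * b⁻¹ ∈ K := hKnorm.conj_mem k hk b
      have hx : k.x = 0 := by
        have := hz _ hconj
        simp [b, hy, hzk] at this
        simpa using this
      ext <;> simp [hx, hy, hzk]
    · -- uniqueness
      intro f' ⟨hfa, hfc, _⟩
      apply MonoidHom.ext
      rintro ⟨g, hg⟩
      induction hg using Subgroup.closure_induction with
      | mem x hx =>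
        rcases hx with rfl | rfl
        · exact hfa.trans (by rw [fHom_apply]; ext <;> simp [a, c_def])
        · exact hfc.trans (by rw [fHom_apply]; ext <;> simp [b, c_def])
      | one => show f' 1 = fHom 1; rw [map_one, map_one]
      | mul x y hx hy ihx ihy =>
        show f' (⟨x, hx⟩ * ⟨y, hy⟩) = fHom (⟨x, hx⟩ * ⟨y, hy⟩)
        rw [map_mul, map_mul, ihx, ihy]
      | inv x hx ih =>
        show f' (⟨x, hx⟩⁻¹) = fHom (⟨x, hx⟩⁻¹)
        rw [map_inv, map_inv, ih]
end

section
/- The infinite dihedral pro-2 group G = Z_2 ⋊ C_2 (the 2-adic integers with C_2 acting by inversion) admits a simple virtual endomorphism of degree 2, but the set {g ∈ G | g^2 = 1} is not a subgroup of G. -/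
/-- The inversion automorphism `x ↦ -x` of `ℤ₂`, written multiplicatively. -/
noncomputable def negAut : MulAut (Multiplicative ℤ_[2]) := MulEquiv.inv (Multiplicative ℤ_[2])

/-- The action of `C₂` on `ℤ₂` by inversion. -/
noncomputable def invAction : Multiplicative (ZMod 2) →* MulAut (Multiplicative ℤ_[2]) :=
  MonoidHom.mk' (fun c => if c.toAdd = 0 then 1 else negAut) (by
    have hsq : negAut * negAut = 1 := by
      refine MulEquiv.ext fun x => ?_
      simp [negAut]
    have h : ∀ c : ZMod 2, c = 0 ∨ c = 1 := by decide
    have h10 : (1 : ZMod 2) ≠ 0 := by decide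
    have h11 : (1 : ZMod 2) + 1 = 0 := by decide
    intro a b
    rcases h a.toAdd with ha | ha <;> rcases h b.toAdd with hb | hb <;>
      simp [toAdd_mul, ha, hb, h10, h11, hsq])

/-- The infinite dihedral pro-2 group `ℤ₂ ⋊ C₂`. -/
def DihedralPro2 : Type :=
  Multiplicative ℤ_[2] ⋊[invAction] Multiplicative (ZMod 2)

noncomputable instance : Group DihedralPro2 :=
  inferInstanceAs (Group (Multiplicative ℤ_[2] ⋊[invAction] Multiplicative (ZMod 2)))

-- auxiliary
noncomputable abbrev SDP : Type := Multiplicative ℤ_[2] ⋊[invAction] Multiplicative (ZMod 2)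

lemma invAction_apply (c : Multiplicative (ZMod 2)) (x : Multiplicative ℤ_[2]) :
    invAction c x = if c.toAdd = 0 then x else x⁻¹ := by
  show (if Multiplicative.toAdd c = 0 then (1 : MulAut (Multiplicative ℤ_[2])) else negAut) x
      = if Multiplicative.toAdd c = 0 then x else x⁻¹
  split <;> simp [negAut]

noncomputable def projHom : DihedralPro2 →* Multiplicative (ZMod 2) :=
  MonoidHom.mk' (fun g => Multiplicative.ofAdd
      (PadicInt.toZMod (Multiplicative.toAdd (SemidirectProduct.left g)))) (by
    intro a b
    show Multiplicative.ofAdd (PadicInt.toZMod (Multiplicative.toAdd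
        (SemidirectProduct.left (a : SDP) * invAction (SemidirectProduct.right (a : SDP))
          (SemidirectProduct.left (b : SDP))))) = _
    rw [invAction_apply]
    rcases eq_or_ne (Multiplicative.toAdd (a : SDP).right) 0 with h | h <;>
      simp [h, ← ofAdd_add, CharTwo.neg_eq])

def toS : DihedralPro2 → SDP := fun g => g
def ofS : SDP → DihedralPro2 := fun g => g

lemma toS_mul (a b : DihedralPro2) : toS (a * b) = toS a * toS b := rfl

lemma two_dvd_of_mem_ker {g : DihedralPro2} (hg : g ∈ projHom.ker) :
    (2 : ℤ_[2]) ∣ Multiplicative.toAdd (toS g).left := by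
  rw [MonoidHom.mem_ker] at hg
  have h : PadicInt.toZMod (Multiplicative.toAdd (toS g).left) = 0 := by
    simpa [projHom, toS] using hg
  have h2 : Multiplicative.toAdd (toS g).left ∈
      RingHom.ker (PadicInt.toZMod : ℤ_[2] →+* ZMod 2) := h
  rw [PadicInt.ker_toZMod, PadicInt.maximalIdeal_eq_span_p, Ideal.mem_span_singleton] at h2
  simpa using h2

noncomputable def halfOf (g : projHom.ker) : ℤ_[2] := (two_dvd_of_mem_ker g.2).choose

lemma halfOf_spec (g : projHom.ker) :
    Multiplicative.toAdd (toS (g : DihedralPro2)).left = 2 * halfOf g :=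
  (two_dvd_of_mem_ker g.2).choose_spec

noncomputable def fmap : projHom.ker →* DihedralPro2 :=
  MonoidHom.mk' (fun g => ofS ⟨Multiplicative.ofAdd (halfOf g), (toS (g : DihedralPro2)).right⟩) (by
    intro a b
    refine SemidirectProduct.ext (φ := invAction) ?_ ?_
    · show Multiplicative.ofAdd (halfOf (a*b)) =
        Multiplicative.ofAdd (halfOf a) *
          invAction (toS (a : DihedralPro2)).right (Multiplicative.ofAdd (halfOf b))
      rw [invAction_apply]
      have key : (2 : ℤ_[2]) * halfOf (a*b) =
          2 * (halfOf a + (if Multiplicative.toAdd (toS (a : DihedralPro2)).right = 0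
            then halfOf b else -halfOf b)) := by
        rw [← halfOf_spec]
        have hab : toS ((a*b : projHom.ker) : DihedralPro2)
            = toS (a : DihedralPro2) * toS (b : DihedralPro2) := rfl
        rw [hab, SemidirectProduct.mul_left, invAction_apply]
        split <;>
          simp [mul_add, ← halfOf_spec a, ← halfOf_spec b]
      have := mul_left_cancel₀ (two_ne_zero : (2:ℤ_[2]) ≠ 0) key
      rw [this]
      split
      · rw [← ofAdd_add]
      · rw [← ofAdd_neg, ← ofAdd_add]
    · rfl)

lemma fmap_right (g : projHom.ker) : (toS (fmap g)).right = (toS (g : DihedralPro2)).right := rfl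

lemma fmap_left (g : projHom.ker) :
    (2:ℤ_[2]) * Multiplicative.toAdd (toS (fmap g)).left =
      Multiplicative.toAdd (toS (g : DihedralPro2)).left := by
  rw [halfOf_spec g]; rfl

lemma projHom_surjective : Function.Surjective projHom := by
  intro c
  have h : ∀ d : ZMod 2, d = 0 ∨ d = 1 := by decide
  rcases h (Multiplicative.toAdd c) with hc | hc
  · refine ⟨1, ?_⟩
    rw [map_one]
    have : c = Multiplicative.ofAdd (Multiplicative.toAdd c) := rfl
    rw [this, hc]; rfl
  · refine ⟨ofS ⟨Multiplicative.ofAdd 1, 1⟩, ?_⟩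
    have : projHom (ofS ⟨Multiplicative.ofAdd 1, 1⟩)
        = Multiplicative.ofAdd (PadicInt.toZMod (1 : ℤ_[2])) := rfl
    rw [this, map_one]
    have hc' : c = Multiplicative.ofAdd (Multiplicative.toAdd c) := rfl
    rw [hc', hc]

lemma ker_index : projHom.ker.index = 2 := by
  rw [Subgroup.index_ker, MonoidHom.range_eq_top.mpr projHom_surjective]
  rw [Subgroup.card_top]
  simp [Nat.card_eq_fintype_card]

lemma norm_two_mul (y : ℤ_[2]) : ‖(2:ℤ_[2]) * y‖ = (1/2) * ‖y‖ := by
  rw [norm_mul]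
  have h2 : ‖(2:ℤ_[2])‖ = ((2:ℕ):ℝ)⁻¹ := by
    have := PadicInt.norm_p (p := 2)
    simpa using this
  rw [h2]; norm_num


/-- the infinite dihedral pro-2 group `G = ℤ₂ ⋊ C₂` admits a
simple virtual endomorphism of degree 2, yet the set `{g ∈ G | g² = 1}` is not
a subgroup of `G`. -/
theorem stmt19 :
    (∃ (H : Subgroup DihedralPro2) (f : H →* DihedralPro2), H.index = 2 ∧
      ∀ K : Subgroup DihedralPro2, K ≤ H → K.Normal →
        (∀ k (hk : k ∈ H), k ∈ K → f ⟨k, hk⟩ ∈ K) → K = ⊥) ∧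
    ¬ ∃ Ω : Subgroup DihedralPro2, (Ω : Set DihedralPro2) = {g | g ^ 2 = 1} := by
  constructor
  · refine ⟨projHom.ker, fmap, ker_index, ?_⟩
    intro K hKH hN hf
    -- main claim: only the trivial purely-translational element lies in K
    have claim : ∀ x : ℤ_[2], ofS ⟨Multiplicative.ofAdd x, 1⟩ ∈ K → x = 0 := by
      have desc : ∀ n : ℕ, ∀ x : ℤ_[2], ofS ⟨Multiplicative.ofAdd x, 1⟩ ∈ K →
          ((1:ℝ)/2) ^ n ≤ ‖x‖ → False := by
        intro n
        induction n with
        | zero =>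
          intro x hx hn
          obtain ⟨y, hy⟩ := two_dvd_of_mem_ker (hKH hx)
          have hxy : x = 2 * y := hy
          have : ‖x‖ ≤ 1/2 := by
            rw [hxy, norm_two_mul]
            have := PadicInt.norm_le_one y
            linarith
          rw [pow_zero] at hn
          linarith
        | succ n ih =>
          intro x hx hn
          have hk : ofS ⟨Multiplicative.ofAdd x, 1⟩ ∈ projHom.ker := hKH hx
          have hmem := hf _ hk hx
          set g : projHom.ker := ⟨ofS ⟨Multiplicative.ofAdd x, 1⟩, hk⟩ with hg
          have hxy : x = 2 * halfOf g := halfOf_spec g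
          have hfg : fmap g = ofS ⟨Multiplicative.ofAdd (halfOf g), 1⟩ := rfl
          rw [hfg] at hmem
          refine ih (halfOf g) hmem ?_
          have hnx : ‖x‖ = (1/2) * ‖halfOf g‖ := by rw [hxy, norm_two_mul]
          have h2 : (0:ℝ) < 1/2 := by norm_num
          have hn' : (1/2:ℝ) * ((1/2)^n) ≤ (1/2) * ‖halfOf g‖ := by
            rw [hnx] at hn
            calc (1/2:ℝ) * ((1/2)^n) = (1/2)^(n+1) := by ring
              _ ≤ (1/2) * ‖halfOf g‖ := hn
          exact le_of_mul_le_mul_left hn' h2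
      intro x hx
      by_contra hx0
      have hpos : 0 < ‖x‖ := by
        simpa [norm_pos_iff] using hx0
      obtain ⟨n, hnlt⟩ := exists_pow_lt_of_lt_one hpos (by norm_num : (1:ℝ)/2 < 1)
      exact desc n x hx hnlt.le
    rw [eq_bot_iff]
    intro g hgK
    rw [Subgroup.mem_bot]
    by_contra hg1
    have h : ∀ d : ZMod 2, d = 0 ∨ d = 1 := by decide
    rcases h (Multiplicative.toAdd (toS g).right) with hr | hr
    · -- right component trivial
      have hgeq : g = ofS ⟨Multiplicative.ofAdd (Multiplicative.toAdd (toS g).left), 1⟩ := by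
        refine SemidirectProduct.ext (φ := invAction) ?_ ?_
        · exact (ofAdd_toAdd _).symm
        · show (toS g).right = 1
          have : (toS g).right = Multiplicative.ofAdd (Multiplicative.toAdd (toS g).right) := rfl
          rw [this, hr]; rfl
      have hx := claim _ (hgeq ▸ hgK)
      apply hg1
      rw [hgeq]
      have : Multiplicative.ofAdd (Multiplicative.toAdd (toS g).left)
          = Multiplicative.ofAdd (0 : ℤ_[2]) := by rw [hx]
      rw [this]
      rfl
    · -- right component is the reflection
      obtain ⟨l, hgeq⟩ : ∃ l : Multiplicative ℤ_[2], g = ofS ⟨l, Multiplicative.ofAdd 1⟩ := by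
        refine ⟨(toS g).left, ?_⟩
        refine SemidirectProduct.ext (φ := invAction) rfl ?_
        show (toS g).right = Multiplicative.ofAdd 1
        rw [← ofAdd_toAdd ((toS g).right), hr]
      subst hgeq
      have hkK : (ofS ⟨Multiplicative.ofAdd 1, 1⟩) * (ofS ⟨l, Multiplicative.ofAdd 1⟩) *
            (ofS ⟨Multiplicative.ofAdd 1, 1⟩)⁻¹ * (ofS ⟨l, Multiplicative.ofAdd 1⟩)⁻¹ ∈ K :=
        mul_mem (hN.conj_mem _ hgK (ofS ⟨Multiplicative.ofAdd 1, 1⟩)) (inv_mem hgK)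
      have hkeq : (ofS ⟨Multiplicative.ofAdd 1, 1⟩) * (ofS ⟨l, Multiplicative.ofAdd 1⟩) *
            (ofS ⟨Multiplicative.ofAdd 1, 1⟩)⁻¹ * (ofS ⟨l, Multiplicative.ofAdd 1⟩)⁻¹
          = ofS ⟨Multiplicative.ofAdd (2 : ℤ_[2]), 1⟩ := by
        show (⟨Multiplicative.ofAdd 1, 1⟩ : SDP) * ⟨l, Multiplicative.ofAdd 1⟩ *
            (⟨Multiplicative.ofAdd 1, 1⟩ : SDP)⁻¹ * (⟨l, Multiplicative.ofAdd 1⟩ : SDP)⁻¹ =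
            ⟨Multiplicative.ofAdd (2 : ℤ_[2]), 1⟩
        have e1 : ¬ ((1 : ZMod 2) = 0) := by decide
        have e2 : ¬ ((-1 : ZMod 2) = 0) := by decide
        refine SemidirectProduct.ext ?_ ?_
        · simp only [SemidirectProduct.mul_left, SemidirectProduct.inv_left,
            SemidirectProduct.mul_right, SemidirectProduct.inv_right, invAction_apply,
            toAdd_one, toAdd_ofAdd, toAdd_inv, one_mul, mul_one, inv_one, neg_zero,
            if_pos, e1, e2, if_neg, if_true, if_false, ite_true, ite_false]
          apply Multiplicative.toAdd.injective
          simp only [toAdd_mul, toAdd_inv, toAdd_ofAdd, inv_inv]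
          ring
        · simp only [SemidirectProduct.mul_right, SemidirectProduct.inv_right]
          apply Multiplicative.toAdd.injective
          simp only [toAdd_mul, toAdd_inv, toAdd_ofAdd, toAdd_one]
          decide
      rw [hkeq] at hkK
      have := claim _ hkK
      exact (two_ne_zero (α := ℤ_[2])) this
  · rintro ⟨Ω, hΩ⟩
    set a : DihedralPro2 := ofS ⟨1, Multiplicative.ofAdd 1⟩ with ha
    set b : DihedralPro2 := ofS ⟨Multiplicative.ofAdd 1, Multiplicative.ofAdd 1⟩ with hb
    have hmemiff : ∀ g : DihedralPro2, g ∈ Ω ↔ g ^ 2 = 1 := by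
      intro g
      constructor
      · intro hg; have : g ∈ (Ω : Set DihedralPro2) := hg
        rwa [hΩ] at this
      · intro hg; have : g ∈ ({g | g ^ 2 = 1} : Set DihedralPro2) := hg
        rw [← hΩ] at this; exact this
    have hsq : ∀ x : Multiplicative ℤ_[2],
        (ofS ⟨x, Multiplicative.ofAdd 1⟩ : DihedralPro2) ^ 2 = 1 := by
      intro x
      rw [pow_two]
      show toS (ofS ⟨x, Multiplicative.ofAdd 1⟩) * toS (ofS ⟨x, Multiplicative.ofAdd 1⟩) = 1
      refine SemidirectProduct.ext ?_ ?_
      · simp only [SemidirectProduct.mul_left, invAction_apply, toS, ofS]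
        rw [if_neg (by decide : Multiplicative.toAdd (Multiplicative.ofAdd (1 : ZMod 2)) ≠ 0)]
        simp
      · show Multiplicative.ofAdd (1:ZMod 2) * Multiplicative.ofAdd (1:ZMod 2) = 1
        decide
    have haΩ : a ∈ Ω := (hmemiff a).mpr (hsq 1)
    have hbΩ : b ∈ Ω := (hmemiff b).mpr (hsq (Multiplicative.ofAdd 1))
    have habΩ : a * b ∈ Ω := mul_mem haΩ hbΩ
    have hab : (a * b) ^ 2 = 1 := (hmemiff _).mp habΩ
    have hab2 : a * b = ofS ⟨Multiplicative.ofAdd (-1 : ℤ_[2]), 1⟩ := by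
      show toS a * toS b = (⟨Multiplicative.ofAdd (-1 : ℤ_[2]), 1⟩ : SDP)
      refine SemidirectProduct.ext ?_ ?_
      · simp only [SemidirectProduct.mul_left, invAction_apply, toS, ofS, ha, hb]
        rw [if_neg (by decide : Multiplicative.toAdd (Multiplicative.ofAdd (1 : ZMod 2)) ≠ 0)]
        simp [← ofAdd_neg]
      · show Multiplicative.ofAdd (1:ZMod 2) * Multiplicative.ofAdd (1:ZMod 2) = 1
        decide
    rw [hab2, pow_two] at hab
    have : Multiplicative.ofAdd (-1 : ℤ_[2]) * Multiplicative.ofAdd (-1 : ℤ_[2]) = 1 := by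
      have := congrArg (fun z : DihedralPro2 => (toS z).left) hab
      have h1 : (toS 1).left = 1 := rfl
      simp only [toS_mul, h1] at this
      simpa [toS, ofS, invAction_apply] using this
    have : (-1 : ℤ_[2]) + -1 = 0 := by
      have h' := congrArg Multiplicative.toAdd this
      simpa [← ofAdd_add] using h'
    have h2 : (2:ℤ_[2]) = 0 := by linear_combination -this
    exact two_ne_zero h2
end
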